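/- Let H_k = D^H_k + L^H_k K^H_k (L^H_k)ᵀ be symmetric, and suppose I + G H_k is invertible where G = D^G_0 is symmetric. Then the DARE residual D(H_k) = −H_k + AᵀH_k(I + G H_k)⁻¹A + H is symmetric, and if A = D^A_0 + L^A_{10}(L^A_{20})ᵀ, H = D^H_0 + (rank ≤ r term), then D(H_k) − (D^H_0 − D^H_k + (D^A_0)ᵀ D^H_k (I + D^G_0 D^H_k)⁻¹ D^A_0) has rank at most 2·m^a + 2·m^h_k + r, where m^a is the number of columns of L^A_{10} and m^h_k of L^H_k. -/

import Mathlib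

set_option maxHeartbeats 1000000

open Matrix

private lemma matrix_rank_add_le {N : ℕ} (A B : Matrix (Fin N) (Fin N) ℝ) :
    (A + B).rank ≤ A.rank + B.rank := by
  classical
  rw [Matrix.rank, Matrix.rank, Matrix.rank, Matrix.mulVecLin_add]
  refine le_trans (Submodule.finrank_mono ?_)
    (Submodule.finrank_add_le_finrank_add_finrank _ _)
  rintro x ⟨y, rfl⟩
  exact Submodule.add_mem_sup (LinearMap.mem_range_self _ y) (LinearMap.mem_range_self _ y)

/-- The DARE residual `D(H_k) = −H_k + Aᵀ H_k (I + G H_k)⁻¹ A + H` is symmetric, and after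
subtracting its banded part it has rank at most `2 mᵃ + 2 mʰ + r`. -/
theorem fsda_residual_structure {N ma mh r : ℕ}
    (DA0 DG0 DH0 DHk H : Matrix (Fin N) (Fin N) ℝ)
    (L10 L20 : Matrix (Fin N) (Fin ma) ℝ)
    (LHk : Matrix (Fin N) (Fin mh) ℝ) (KHk : Matrix (Fin mh) (Fin mh) ℝ)
    (hDHk : DHk.IsSymm) (hKHk : KHk.IsSymm) (hG : DG0.IsSymm) (hH : H.IsSymm)
    (hHr : (H - DH0).rank ≤ r)
    (hinv : IsUnit (1 + DG0 * (DHk + LHk * KHk * LHkᵀ)).det)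
    (hinvb : IsUnit (1 + DG0 * DHk).det) :
    (-(DHk + LHk * KHk * LHkᵀ) +
        (DA0 + L10 * L20ᵀ)ᵀ * (DHk + LHk * KHk * LHkᵀ) *
          (1 + DG0 * (DHk + LHk * KHk * LHkᵀ))⁻¹ * (DA0 + L10 * L20ᵀ) + H).IsSymm ∧
      ((-(DHk + LHk * KHk * LHkᵀ) +
          (DA0 + L10 * L20ᵀ)ᵀ * (DHk + LHk * KHk * LHkᵀ) *
            (1 + DG0 * (DHk + LHk * KHk * LHkᵀ))⁻¹ * (DA0 + L10 * L20ᵀ) + H) -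
        (DH0 - DHk + DA0ᵀ * DHk * (1 + DG0 * DHk)⁻¹ * DA0)).rank ≤
        2 * ma + 2 * mh + r := by
  set Hk : Matrix (Fin N) (Fin N) ℝ := DHk + LHk * KHk * LHkᵀ with hHkdef
  set A' : Matrix (Fin N) (Fin N) ℝ := DA0 + L10 * L20ᵀ with hA'def
  set B : Matrix (Fin N) (Fin N) ℝ := 1 + DG0 * Hk with hBdef
  set Bb : Matrix (Fin N) (Fin N) ℝ := 1 + DG0 * DHk with hBbdef
  set C : Matrix (Fin N) (Fin N) ℝ := 1 + Hk * DG0 with hCdef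
  have hHksymm : Hkᵀ = Hk := by
    simp [hHkdef, Matrix.transpose_add, Matrix.transpose_mul, hDHk.eq, hKHk.eq, Matrix.mul_assoc]
  have hC : IsUnit C.det := by
    have h := Matrix.det_one_add_mul_comm DG0 Hk
    rw [hCdef, ← h]
    exact hinv
  have hCB : C * Hk = Hk * B := by
    rw [hCdef, hBdef]; noncomm_ring
  have key1 : Hk * B⁻¹ = C⁻¹ * Hk := by
    have h1 : C * (Hk * B⁻¹) = Hk := by
      rw [← Matrix.mul_assoc, hCB, Matrix.mul_assoc, Matrix.mul_nonsing_inv _ hinv,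
        Matrix.mul_one]
    calc Hk * B⁻¹ = C⁻¹ * (C * (Hk * B⁻¹)) := by
          rw [← Matrix.mul_assoc, Matrix.nonsing_inv_mul _ hC, Matrix.one_mul]
      _ = C⁻¹ * Hk := by rw [h1]
  have hBT : Bᵀ = C := by
    rw [hBdef, hCdef, Matrix.transpose_add, Matrix.transpose_one, Matrix.transpose_mul,
      hHksymm, hG.eq]
  have hmidform : A'ᵀ * Hk * B⁻¹ * A' = A'ᵀ * (C⁻¹ * (Hk * A')) := by
    rw [Matrix.mul_assoc A'ᵀ Hk B⁻¹, key1, Matrix.mul_assoc, Matrix.mul_assoc]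
  constructor
  · rw [Matrix.IsSymm]
    have hmid : (A'ᵀ * Hk * B⁻¹ * A')ᵀ = A'ᵀ * Hk * B⁻¹ * A' := by
      rw [Matrix.transpose_mul, Matrix.transpose_mul, Matrix.transpose_mul,
        Matrix.transpose_transpose, Matrix.transpose_nonsing_inv, hBT, hHksymm, hmidform]
    rw [Matrix.transpose_add, Matrix.transpose_add, Matrix.transpose_neg, hHksymm, hmid, hH.eq]
  · -- key2 : Hk * B⁻¹ - DHk * Bb⁻¹ = C⁻¹ * (LHk*KHk*LHkᵀ) * Bb⁻¹
    have hmiddle : Hk * Bb - C * DHk = LHk * KHk * LHkᵀ := by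
      have h : Hk * Bb - C * DHk = Hk - DHk := by
        rw [hBbdef, hCdef]; noncomm_ring
      rw [h, hHkdef]; abel
    have key2 : Hk * B⁻¹ - DHk * Bb⁻¹ = C⁻¹ * (LHk * KHk * LHkᵀ) * Bb⁻¹ := by
      rw [← hmiddle]
      have h : C⁻¹ * (Hk * Bb - C * DHk) * Bb⁻¹
          = C⁻¹ * Hk * (Bb * Bb⁻¹) - (C⁻¹ * C) * (DHk * Bb⁻¹) := by
        noncomm_ring
      rw [h, Matrix.mul_nonsing_inv _ hinvb, Matrix.nonsing_inv_mul _ hC,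
        Matrix.mul_one, Matrix.one_mul, key1]
    set S : Matrix (Fin N) (Fin N) ℝ := Hk * B⁻¹ with hSdef
    set Sb : Matrix (Fin N) (Fin N) ℝ := DHk * Bb⁻¹ with hSbdef
    have e0 : A'ᵀ * Hk * B⁻¹ * A' = A'ᵀ * S * A' := by
      rw [hSdef, Matrix.mul_assoc A'ᵀ Hk B⁻¹, Matrix.mul_assoc, Matrix.mul_assoc]
    have e0b : DA0ᵀ * DHk * Bb⁻¹ * DA0 = DA0ᵀ * Sb * DA0 := by
      rw [hSbdef, Matrix.mul_assoc DA0ᵀ DHk Bb⁻¹, Matrix.mul_assoc, Matrix.mul_assoc]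
    have e1 : A'ᵀ * S * A' = DA0ᵀ * S * A' + L20 * (L10ᵀ * S * A') := by
      nth_rewrite 1 [hA'def]
      rw [Matrix.transpose_add, Matrix.transpose_mul, Matrix.transpose_transpose,
        Matrix.add_mul, Matrix.add_mul, Matrix.mul_assoc (L20 * L10ᵀ) S A',
        Matrix.mul_assoc L20 L10ᵀ (S * A'), ← Matrix.mul_assoc L10ᵀ S A']
    have e2 : DA0ᵀ * S * A' = DA0ᵀ * S * DA0 + DA0ᵀ * S * (L10 * L20ᵀ) := by
      rw [hA'def, Matrix.mul_add]
    have hT1 : LHk * (-(KHk * LHkᵀ)) = -(LHk * KHk * LHkᵀ) := by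
      rw [Matrix.mul_neg, Matrix.mul_assoc]
    have hT2 : DA0ᵀ * (S - Sb) * DA0 = DA0ᵀ * S * DA0 - DA0ᵀ * Sb * DA0 := by
      rw [Matrix.mul_sub, Matrix.sub_mul]
    have hdecomp :
        (-Hk + A'ᵀ * Hk * B⁻¹ * A' + H) - (DH0 - DHk + DA0ᵀ * DHk * Bb⁻¹ * DA0)
          = (LHk * (-(KHk * LHkᵀ)))
            + ((DA0ᵀ * (S - Sb) * DA0 + DA0ᵀ * S * (L10 * L20ᵀ)) + L20 * (L10ᵀ * S * A'))
            + (H - DH0) := by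
      rw [e0, e0b, e1, e2, hT1, hT2, hHkdef]
      abel
    rw [hdecomp]
    have r1 : (LHk * (-(KHk * LHkᵀ))).rank ≤ mh :=
      le_trans (Matrix.rank_mul_le_left _ _) (Matrix.rank_le_width LHk)
    have r2 : (DA0ᵀ * (S - Sb) * DA0 + DA0ᵀ * S * (L10 * L20ᵀ)).rank ≤ mh + ma := by
      refine le_trans (matrix_rank_add_le _ _) (add_le_add ?_ ?_)
      · rw [key2]
        calc (DA0ᵀ * (C⁻¹ * (LHk * KHk * LHkᵀ) * Bb⁻¹) * DA0).rank
            ≤ (DA0ᵀ * (C⁻¹ * (LHk * KHk * LHkᵀ) * Bb⁻¹)).rank :=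
              Matrix.rank_mul_le_left _ _
          _ ≤ (C⁻¹ * (LHk * KHk * LHkᵀ) * Bb⁻¹).rank := Matrix.rank_mul_le_right _ _
          _ ≤ (C⁻¹ * (LHk * KHk * LHkᵀ)).rank := Matrix.rank_mul_le_left _ _
          _ ≤ (LHk * KHk * LHkᵀ).rank := Matrix.rank_mul_le_right _ _
          _ ≤ (LHk * KHk).rank := Matrix.rank_mul_le_left _ _
          _ ≤ mh := le_trans (Matrix.rank_mul_le_right _ _) (Matrix.rank_le_height KHk)
      · calc (DA0ᵀ * S * (L10 * L20ᵀ)).rank ≤ (L10 * L20ᵀ).rank :=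
              Matrix.rank_mul_le_right _ _
          _ ≤ ma := le_trans (Matrix.rank_mul_le_left _ _) (Matrix.rank_le_width L10)
    have r3 : (L20 * (L10ᵀ * S * A')).rank ≤ ma :=
      le_trans (Matrix.rank_mul_le_left _ _) (Matrix.rank_le_width L20)
    calc ((LHk * (-(KHk * LHkᵀ)))
            + ((DA0ᵀ * (S - Sb) * DA0 + DA0ᵀ * S * (L10 * L20ᵀ)) + L20 * (L10ᵀ * S * A'))
            + (H - DH0)).rank
        ≤ ((LHk * (-(KHk * LHkᵀ)))
            + ((DA0ᵀ * (S - Sb) * DA0 + DA0ᵀ * S * (L10 * L20ᵀ)) + L20 * (L10ᵀ * S * A'))).rank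
          + (H - DH0).rank := matrix_rank_add_le _ _
      _ ≤ ((LHk * (-(KHk * LHkᵀ))).rank
          + ((DA0ᵀ * (S - Sb) * DA0 + DA0ᵀ * S * (L10 * L20ᵀ)) + L20 * (L10ᵀ * S * A')).rank)
          + (H - DH0).rank := Nat.add_le_add_right (matrix_rank_add_le _ _) _
      _ ≤ (mh + ((mh + ma) + ma)) + r := by
            refine add_le_add (add_le_add r1 ?_) hHr
            exact le_trans (matrix_rank_add_le _ _) (add_le_add r2 r3)
      _ ≤ 2 * ma + 2 * mh + r := by omega
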